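/- (Theorem 4, Property 7) Let C be an initial configuration of the BRP in which every stack is nonempty. Let V₁ (upper) and V₂ (lower) be virtual layers of C such that V₁ ∩ V₂ = {b*} for a single block b* that is well placed in C, in every stack other than the stack of b* the V₁-block lies strictly above the V₂-block, both V₁ and V₂ satisfy the conditions of Property 5, and the label of b* equals the maximum over all stacks s of the minimum label present in stack s after deleting all blocks strictly above the V₁-block of s. Then every feasible move sequence for C either contains at least 2 non-BG relocations of blocks of V₁ ∪ V₂, or contains at least one GB relocation of b* and at least one BG relocation of b*. -/

import Mathlib

/-- A configuration of the BRP: each stack holds a list of blocks, bottom to top. -/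
abbrev Config (B S : ℕ) := Fin S → List (Fin B)

/-- Every block occurs exactly once among the stacks. -/
def IsConfig {B S : ℕ} (C : Config B S) : Prop :=
  ∀ b : Fin B, (∑ s : Fin S, (C s).count b) = 1

/-- `a` lies strictly below `b` in stack `s` of `C`. -/
def StrictlyBelow {B S : ℕ} (C : Config B S) (s : Fin S) (a b : Fin B) : Prop :=
  ∃ i j : ℕ, i < j ∧ (C s)[i]? = some a ∧ (C s)[j]? = some b

/-- A block is badly placed if some smaller-labelled block lies below it in its stack. -/
def BadlyPlaced {B S : ℕ} (C : Config B S) (b : Fin B) : Prop :=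
  ∃ s a, a < b ∧ StrictlyBelow C s a b

/-- Moves: retrieve the top block of a stack, or relocate the top block of one
stack onto another stack. -/
inductive Move (S : ℕ) where
  | retrieve (s : Fin S)
  | relocate (src dst : Fin S)

def applyMove {B S : ℕ} (C : Config B S) : Move S → Config B S
  | .retrieve s => Function.update C s (C s).dropLast
  | .relocate src dst =>
    match (C src).getLast? with
    | some b =>
      let C' := Function.update C src (C src).dropLast
      Function.update C' dst (C' dst ++ [b])
    | none => C

def Enabled {B S : ℕ} (C : Config B S) : Move S → Prop
  | .retrieve s => ∃ b, (C s).getLast? = some b ∧ ∀ (s' : Fin S), ∀ b' ∈ C s', b ≤ b'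
  | .relocate src dst => src ≠ dst ∧ C src ≠ []

def play {B S : ℕ} (C : Config B S) : List (Move S) → Config B S
  | [] => C
  | m :: ms => play (applyMove C m) ms

def AllEnabled {B S : ℕ} (C : Config B S) : List (Move S) → Prop
  | [] => True
  | m :: ms => Enabled C m ∧ AllEnabled (applyMove C m) ms

/-- A feasible move sequence: every move is enabled and at the end all blocks
have been retrieved. -/
def Feasible {B S : ℕ} (C : Config B S) (ms : List (Move S)) : Prop :=
  AllEnabled C ms ∧ ∀ s, play C ms s = []

/-- `b` is the block moved by `m` (a relocation) performed in configuration `C`. -/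
def MovedBlock {B S : ℕ} (C : Config B S) (m : Move S) (b : Fin B) : Prop :=
  ∃ src dst, m = .relocate src dst ∧ src ≠ dst ∧ (C src).getLast? = some b

/-- The four types of relocation moves. -/
inductive MType where
  | BB | BG | GB | GG

/-- The relocation `m`, moving block `b` from configuration `C`, has the given type. -/
def MTypeOf {B S : ℕ} (C : Config B S) (m : Move S) (b : Fin B) : MType → Prop
  | .BB => BadlyPlaced C b ∧ BadlyPlaced (applyMove C m) b
  | .BG => BadlyPlaced C b ∧ ¬ BadlyPlaced (applyMove C m) b
  | .GB => ¬ BadlyPlaced C b ∧ BadlyPlaced (applyMove C m) b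
  | .GG => ¬ BadlyPlaced C b ∧ ¬ BadlyPlaced (applyMove C m) b

/-- `m` is a relocation of a block of `𝔅`. -/
def RelocIn {B S : ℕ} (𝔅 : Set (Fin B)) (C : Config B S) (m : Move S) : Prop :=
  ∃ b ∈ 𝔅, MovedBlock C m b

/-- `m` is a relocation of a block of `𝔅` of type `mt`. -/
def RelocTypeIn {B S : ℕ} (mt : MType) (𝔅 : Set (Fin B)) (C : Config B S) (m : Move S) : Prop :=
  ∃ b ∈ 𝔅, MovedBlock C m b ∧ MTypeOf C m b mt

/-- `m` is a non-BG relocation of a block of `𝔅`. -/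
def RelocNonBGIn {B S : ℕ} (𝔅 : Set (Fin B)) (C : Config B S) (m : Move S) : Prop :=
  ∃ b ∈ 𝔅, MovedBlock C m b ∧ ¬ MTypeOf C m b MType.BG

/-- Count the moves of a sequence satisfying `P` (evaluated in the configuration
in which each move is performed). -/
noncomputable def countMoves {B S : ℕ} (P : Config B S → Move S → Prop) :
    Config B S → List (Move S) → ℕ
  | _, [] => 0
  | C, m :: ms =>
    (@ite ℕ (P C m) (Classical.propDecidable _) 1 0) + countMoves P (applyMove C m) ms

/-- Minimum over feasible move sequences of the number of moves satisfying `P`. -/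
noncomputable def fMin {B S : ℕ} (C : Config B S) (P : Config B S → Move S → Prop) : ℕ :=
  sInf { n | ∃ ms, Feasible C ms ∧ countMoves P C ms = n }

/-- `f(𝔅)`: least number of relocations applied to blocks of `𝔅`. -/
noncomputable def fRel {B S : ℕ} (C : Config B S) (𝔅 : Set (Fin B)) : ℕ :=
  fMin C (RelocIn 𝔅)

/-- `f_mt(𝔅)`: least number of type-`mt` relocations applied to blocks of `𝔅`. -/
noncomputable def fTyp {B S : ℕ} (C : Config B S) (mt : MType) (𝔅 : Set (Fin B)) : ℕ :=
  fMin C (RelocTypeIn mt 𝔅)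

/-- `f_nonBG(𝔅)`: least number of non-BG relocations applied to blocks of `𝔅`. -/
noncomputable def fNonBG {B S : ℕ} (C : Config B S) (𝔅 : Set (Fin B)) : ℕ :=
  fMin C (RelocNonBGIn 𝔅)

/-- The top 1st layer: the topmost block of each stack. -/
def TopLayer {B S : ℕ} (C : Config B S) : Set (Fin B) :=
  {b | ∃ s, (C s).getLast? = some b}

/-- The top `k` layers: the topmost `k` blocks of every stack. -/
def TopK {B S : ℕ} (C : Config B S) (k : ℕ) : Set (Fin B) :=
  {b | ∃ s, b ∈ (C s).drop ((C s).length - k)}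

/-- The top `j`-th layer: the `j`-th block from the top of every stack. -/
def TopJth {B S : ℕ} (C : Config B S) (j : ℕ) : Set (Fin B) :=
  {b | ∃ s, (C s)[(C s).length - j]? = some b}

/-- A virtual layer: a set of blocks containing exactly one block from each stack. -/
def VirtualLayer {B S : ℕ} (C : Config B S) (V : Set (Fin B)) : Prop :=
  ∀ s : Fin S, ∃! b : Fin B, b ∈ V ∧ b ∈ C s

/-- `a` lies at or below the `V`-block of stack `s`. -/
def AtOrBelowLayer {B S : ℕ} (C : Config B S) (V : Set (Fin B)) (s : Fin S) (a : Fin B) : Prop :=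
  ∃ b j, b ∈ V ∧ (C s)[j]? = some b ∧ a ∈ (C s).take (j + 1)

/-- `V` is a virtual layer satisfying the conditions of Property 5:
(1) in some stack, a block strictly below the `V`-block of that stack has a smaller
label than every block of `V`; (2) every badly placed block of `V` has a label
strictly greater than the minimum label present in stack `s` after deleting all
blocks strictly above the `V`-block of `s`, for every stack `s`. -/
def P5 {B S : ℕ} (C : Config B S) (V : Set (Fin B)) : Prop :=
  VirtualLayer C V ∧
  (∃ s a b, b ∈ V ∧ StrictlyBelow C s a b ∧ ∀ c ∈ V, a < c) ∧
  (∀ b ∈ V, BadlyPlaced C b → ∀ s : Fin S, ∃ a, AtOrBelowLayer C V s a ∧ a < b)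

/-- A pair of virtual layers `V₁` (upper), `V₂` (lower) with shared well-placed
block `bstar` satisfying the conditions of Property 7. -/
def P7 {B S : ℕ} (C : Config B S) (V₁ V₂ : Set (Fin B)) (bstar : Fin B) : Prop :=
  V₁ ∩ V₂ = {bstar} ∧
  ¬ BadlyPlaced C bstar ∧
  (∀ s : Fin S, bstar ∉ C s →
    ∃ b₁ b₂, b₁ ∈ V₁ ∧ b₂ ∈ V₂ ∧ StrictlyBelow C s b₂ b₁) ∧
  P5 C V₁ ∧ P5 C V₂ ∧
  (∀ s : Fin S, ∃ a, AtOrBelowLayer C V₁ s a ∧ a ≤ bstar) ∧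
  (∃ s : Fin S, ∀ a, AtOrBelowLayer C V₁ s a → bstar ≤ a)

/-- Push blocks one by one onto the indicated stacks. -/
def pushAll {B S : ℕ} (C : Config B S) : List (Fin B × Fin S) → Config B S
  | [] => C
  | p :: rest => pushAll (Function.update C p.2 (C p.2 ++ [p.1])) rest

/-- The blocks lying strictly above position `i` of stack `s`, listed from the
top of the stack downward (the processing order of the experiment). -/
def aboveList {B S : ℕ} (C : Config B S) (s : Fin S) (i : ℕ) : List (Fin B) :=
  ((C s).drop (i + 1)).reverse

/-- The arrangement resulting from the experiment of Property 4: the blocks above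
position `i` of stack `s` are relocated exactly once, from the top downward, onto
the stacks listed in `ds`. -/
def expResult {B S : ℕ} (C : Config B S) (s : Fin S) (i : ℕ) (ds : List (Fin S)) :
    Config B S :=
  pushAll (Function.update C s ((C s).take (i + 1))) ((aboveList C s i).zip ds)

/-- The condition of Property 4 (target block at position `i` of stack `sStar`):
in every experiment, some relocated block ends badly placed. -/
def P4Cond {B S : ℕ} (C : Config B S) (sStar : Fin S) (i : ℕ) : Prop :=
  ∀ ds : List (Fin S), ds.length = (aboveList C sStar i).length →
    (∀ d ∈ ds, d ≠ sStar) →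
    ∃ b ∈ aboveList C sStar i, BadlyPlaced (expResult C sStar i ds) b

/-- The set `𝔅⁴`: the blocks above the target block together with, for each
nonempty stack other than the target's stack, its block of minimum label. -/
def B4Set {B S : ℕ} (C : Config B S) (sStar : Fin S) (i : ℕ) : Set (Fin B) :=
  {b | b ∈ aboveList C sStar i} ∪
  {b | ∃ s, s ≠ sStar ∧ b ∈ C s ∧ ∀ b' ∈ C s, b ≤ b'}

/-- The number of direct blockages: adjacent pairs in a stack whose upper block
has a strictly larger label. -/
def directBlockages {B S : ℕ} (C : Config B S) : ℕ :=
  ∑ s : Fin S, (((C s).zip (C s).tail).filter (fun p => decide (p.1 < p.2))).length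

/-- The number of relocations in a move sequence. -/
def relocCount {S : ℕ} (ms : List (Move S)) : ℕ :=
  (ms.filter (fun m => match m with | Move.relocate _ _ => true | Move.retrieve _ => false)).length

/-- The minimum number of relocations over all feasible move sequences. -/
noncomputable def fAll {B S : ℕ} (C : Config B S) : ℕ :=
  sInf { n | ∃ ms, Feasible C ms ∧ relocCount ms = n }

/-- `g(L)`: `L` plus the minimum number of direct blockages over all partial
plans with exactly `L` relocations. -/
noncomputable def gIter {B S : ℕ} (C : Config B S) (L : ℕ) : ℕ :=
  L + sInf { d | ∃ ms : List (Move S), AllEnabled C ms ∧ relocCount ms = L ∧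
      d = directBlockages (play C ms) }

namespace BRP7

open List
variable {B S : ℕ} {α : Type*}

lemma mem_of_getElem?' {l : List α} {i : ℕ} {a : α} (h : l[i]? = some a) : a ∈ l := by
  obtain ⟨h1, h2⟩ := List.getElem?_eq_some_iff.mp h; exact h2 ▸ List.getElem_mem h1

lemma lt_length_of_getElem? {l : List α} {i : ℕ} {a : α} (h : l[i]? = some a) : i < l.length :=
  (List.getElem?_eq_some_iff.mp h).1

lemma exists_getElem?_of_mem {l : List α} {a : α} (h : a ∈ l) : ∃ i : ℕ, l[i]? = some a := by
  obtain ⟨i, hi, h⟩ := List.getElem_of_mem h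
  exact ⟨i, by rw [List.getElem?_eq_some_iff]; exact ⟨hi, h⟩⟩

lemma two_le_count [DecidableEq α] {l : List α} {i j : ℕ} {b : α}
    (hij : i < j) (hi : l[i]? = some b) (hj : l[j]? = some b) : 2 ≤ l.count b := by
  have h1 : b ∈ l.take j := mem_of_getElem?' (i := i) (by rw [List.getElem?_take]; simp [hij, hi])
  have h2 : b ∈ l.drop j := mem_of_getElem?' (i := 0) (by rw [List.getElem?_drop]; simpa using hj)
  have e : l.count b = (l.take j).count b + (l.drop j).count b := by
    conv_lhs => rw [← List.take_append_drop j l]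
    rw [List.count_append]
  have c1 : 1 ≤ (l.take j).count b := List.count_pos_iff.mpr h1
  have c2 : 1 ≤ (l.drop j).count b := List.count_pos_iff.mpr h2
  omega

lemma getElem?_unique [DecidableEq α] {l : List α} {i j : ℕ} {b : α}
    (hc : l.count b ≤ 1) (hi : l[i]? = some b) (hj : l[j]? = some b) : i = j := by
  rcases lt_trichotomy i j with h|h|h
  · exact absurd (two_le_count h hi hj) (by omega)
  · exact h
  · exact absurd (two_le_count h hj hi) (by omega)

lemma getElem?_append_left' {l t : List α} {i : ℕ} (h : i < l.length) : (l ++ t)[i]? = l[i]? := by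
  rw [List.getElem?_append]; simp [h]

lemma getElem?_take' {l : List α} {i n : ℕ} (h : i < n) : (l.take n)[i]? = l[i]? := by
  rw [List.getElem?_take]; simp [h]


variable {B S : ℕ}

/-- Invariant: every block occurs at most once overall. -/
def Sub1 (D : Config B S) : Prop := ∀ b : Fin B, (∑ s : Fin S, (D s).count b) ≤ 1

/-- Invariant: the bottom part of each stack, up to and including the `V`-block,
is unchanged from the original configuration `C`. -/
def PInv (C : Config B S) (V : Set (Fin B)) (D : Config B S) : Prop :=
  ∀ d : Fin S, ∃ w j t, w ∈ V ∧ (C d)[j]? = some w ∧ D d = (C d).take (j+1) ++ t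

lemma sub1_count {D : Config B S} (h : Sub1 D) (s : Fin S) (b : Fin B) :
    (D s).count b ≤ 1 :=
  le_trans (Finset.single_le_sum (f := fun x => (D x).count b)
    (fun _ _ => Nat.zero_le _) (Finset.mem_univ s)) (h b)

lemma sub1_stack_unique {D : Config B S} (h : Sub1 D) {b : Fin B} {s s' : Fin S}
    (hs : b ∈ D s) (hs' : b ∈ D s') : s = s' := by
  by_contra hne
  have h1 : 1 ≤ (D s).count b := List.count_pos_iff.mpr hs
  have h2 : 1 ≤ (D s').count b := List.count_pos_iff.mpr hs'
  have : (D s).count b + (D s').count b ≤ ∑ x : Fin S, (D x).count b := by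
    rw [← Finset.sum_pair hne (f := fun x => (D x).count b)]
    exact Finset.sum_le_sum_of_subset (Finset.subset_univ _)
  have := h b
  omega

lemma isConfig_count {C : Config B S} (hC : IsConfig C) (s : Fin S) (b : Fin B) :
    (C s).count b ≤ 1 :=
  le_trans (Finset.single_le_sum (f := fun x => (C x).count b)
    (fun _ _ => Nat.zero_le _) (Finset.mem_univ s)) (le_of_eq (hC b))

lemma isConfig_stack_unique {C : Config B S} (hC : IsConfig C) {b : Fin B} {s s' : Fin S}
    (hs : b ∈ C s) (hs' : b ∈ C s') : s = s' :=
  sub1_stack_unique (fun b => le_of_eq (hC b)) hs hs'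

lemma relocate_apply {D : Config B S} {src dst : Fin S} {v : Fin B}
    (hlast : (D src).getLast? = some v) (hne : src ≠ dst) :
    applyMove D (.relocate src dst) =
      fun s => if s = dst then D dst ++ [v] else if s = src then (D src).dropLast else D s := by
  funext s
  simp only [applyMove, hlast]
  by_cases h1 : s = dst
  · subst h1
    rw [Function.update_self, Function.update_of_ne (Ne.symm hne), if_pos rfl]
  · rw [Function.update_of_ne h1, if_neg h1]
    by_cases h2 : s = src
    · subst h2; rw [Function.update_self, if_pos rfl]
    · rw [Function.update_of_ne h2, if_neg h2]

lemma sub1_step {D : Config B S} {m : Move S} (h : Sub1 D) (hE : Enabled D m) :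
    Sub1 (applyMove D m) := by
  intro b
  cases m with
  | retrieve s =>
    refine le_trans (Finset.sum_le_sum ?_) (h b)
    intro x _
    simp only [applyMove]
    by_cases hx : x = s
    · subst hx; rw [Function.update_self]; exact (List.dropLast_sublist _).count_le b
    · rw [Function.update_of_ne hx]
  | relocate src dst =>
    obtain ⟨hne, hnil⟩ := hE
    obtain ⟨v, hlast⟩ : ∃ v, (D src).getLast? = some v :=
      ⟨(D src).getLast hnil, List.getLast?_eq_getLast hnil⟩
    rw [relocate_apply hlast hne]
    have hdecomp : ∀ g : Fin S → ℕ,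
        ∑ x : Fin S, g x = g dst + (g src + ∑ x ∈ (Finset.univ.erase dst).erase src, g x) := by
      intro g
      rw [Finset.add_sum_erase _ g (Finset.mem_erase.mpr ⟨hne, Finset.mem_univ _⟩),
        Finset.add_sum_erase _ g (Finset.mem_univ dst)]
    have hsrc : (D src).dropLast.count b + List.count b [v] = (D src).count b := by
      conv_rhs => rw [← List.dropLast_append_getLast? v hlast]
      rw [List.count_append]
    have hrest : ∑ x ∈ (Finset.univ.erase dst).erase src,
        (if x = dst then D dst ++ [v] else if x = src then (D src).dropLast else D x).count b
        = ∑ x ∈ (Finset.univ.erase dst).erase src, (D x).count b := by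
      refine Finset.sum_congr rfl ?_
      intro x hx
      obtain ⟨hx1, hx2⟩ := Finset.mem_erase.mp hx
      obtain ⟨hx3, _⟩ := Finset.mem_erase.mp hx2
      rw [if_neg hx3, if_neg hx1]
    rw [hdecomp]
    dsimp only
    rw [if_pos rfl, if_neg hne, if_pos rfl, hrest]
    have := h b
    rw [hdecomp (fun x => (D x).count b)] at this
    rw [List.count_append]
    omega


lemma take_getLast? {α : Type*} {l : List α} {j : ℕ} {w : α} (hj : l[j]? = some w) :
    (l.take (j+1)).getLast? = some w := by
  have hlen : j < l.length := lt_length_of_getElem? hj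
  have hlen' : (l.take (j+1)).length = j + 1 := by
    rw [List.length_take]; omega
  rw [List.getLast?_eq_getElem?, hlen']
  simpa using (getElem?_take' (l := l) (i := j) (n := j+1) (by omega)).trans hj

lemma pinv_getElem {C D : Config B S} {d : Fin S} {w : Fin B} {j : ℕ} {t : List (Fin B)}
    (hj : (C d)[j]? = some w) (hD : D d = (C d).take (j+1) ++ t) {i : ℕ} (hi : i ≤ j) :
    (D d)[i]? = (C d)[i]? := by
  have hlen := lt_length_of_getElem? hj
  rw [hD, getElem?_append_left' (by rw [List.length_take]; omega), getElem?_take' (by omega)]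

lemma cond1_mem {C D : Config B S} {V : Set (Fin B)} (hC : IsConfig C)
    (hV : VirtualLayer C V)
    (hcond1 : ∃ s a b, b ∈ V ∧ StrictlyBelow C s a b ∧ ∀ c ∈ V, a < c)
    (hp : PInv C V D) :
    ∃ a₀ s₁, (∀ c ∈ V, a₀ < c) ∧ a₀ ∈ D s₁ := by
  obtain ⟨s₁, a₀, b₁, hb₁V, ⟨i, j', hij, hi, hj'⟩, hlt⟩ := hcond1
  obtain ⟨w, j, t, hwV, hj, hD⟩ := hp s₁
  have hb₁w : b₁ = w := by
    obtain ⟨u, _, huniq⟩ := hV s₁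
    rw [huniq b₁ ⟨hb₁V, mem_of_getElem?' hj'⟩, huniq w ⟨hwV, mem_of_getElem?' hj⟩]
  subst hb₁w
  have hjj : j' = j := getElem?_unique (isConfig_count hC s₁ b₁) hj' hj
  subst hjj
  refine ⟨a₀, s₁, hlt, ?_⟩
  exact mem_of_getElem?' ((pinv_getElem hj hD (by omega)).trans hi)

lemma atOrBelow_mem {C D : Config B S} {V : Set (Fin B)} (hC : IsConfig C)
    (hV : VirtualLayer C V) (hp : PInv C V D) {d : Fin S} {x : Fin B}
    (h : AtOrBelowLayer C V d x) : x ∈ D d := by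
  obtain ⟨b, j', hbV, hj', hx⟩ := h
  obtain ⟨w, j, t, hwV, hj, hD⟩ := hp d
  have hbw : b = w := by
    obtain ⟨u, _, huniq⟩ := hV d
    rw [huniq b ⟨hbV, mem_of_getElem?' hj'⟩, huniq w ⟨hwV, mem_of_getElem?' hj⟩]
  subst hbw
  have hjj : j' = j := getElem?_unique (isConfig_count hC d b) hj' hj
  subst hjj
  rw [hD]; exact List.mem_append_left _ hx

lemma pinv_init {C : Config B S} {V : Set (Fin B)} (hV : VirtualLayer C V) : PInv C V C := by
  intro d
  obtain ⟨w, ⟨hwV, hwC⟩, _⟩ := hV d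
  obtain ⟨j, hj⟩ := exists_getElem?_of_mem hwC
  exact ⟨w, j, (C d).drop (j+1), hwV, hj, (List.take_append_drop (j+1) (C d)).symm⟩

lemma bp_transfer {C D : Config B S} {V : Set (Fin B)} (hC : IsConfig C)
    (hV : VirtualLayer C V) (hsub : Sub1 D) (hp : PInv C V D) {v : Fin B} (hv : v ∈ V)
    (hbp : BadlyPlaced D v) : BadlyPlaced C v := by
  obtain ⟨s', a, hav, i, k, hik, hi, hk⟩ := hbp
  obtain ⟨d₀, hd₀⟩ : ∃ d, v ∈ C d := by
    by_contra hno
    push_neg at hno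
    have hz : (∑ s : Fin S, (C s).count v) = 0 :=
      Finset.sum_eq_zero (fun s _ => List.count_eq_zero.mpr (hno s))
    have h1 := hC v
    omega
  obtain ⟨w, j, t, hwV, hj, hD⟩ := hp d₀
  have hwv : w = v := by
    obtain ⟨u, _, huniq⟩ := hV d₀
    rw [huniq w ⟨hwV, mem_of_getElem?' hj⟩, huniq v ⟨hv, hd₀⟩]
  subst hwv
  have hvD : (D d₀)[j]? = some w := by rw [pinv_getElem hj hD (le_refl j)]; exact hj
  have hs'd : s' = d₀ := sub1_stack_unique hsub (mem_of_getElem?' hk) (mem_of_getElem?' hvD)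
  subst hs'd
  have hkj : k = j := getElem?_unique (sub1_count hsub _ w) hk hvD
  subst hkj
  refine ⟨s', a, hav, i, k, hik, ?_, hj⟩
  rw [← pinv_getElem hj hD (by omega)]; exact hi

lemma bp_after_push {D : Config B S} {src dst : Fin S} {v a : Fin B}
    (hlast : (D src).getLast? = some v) (hne : src ≠ dst)
    (ha : a ∈ D dst) (hav : a < v) :
    BadlyPlaced (applyMove D (.relocate src dst)) v := by
  rw [relocate_apply hlast hne]
  obtain ⟨i, hi⟩ := exists_getElem?_of_mem ha
  have hilen := lt_length_of_getElem? hi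
  refine ⟨dst, a, hav, i, (D dst).length, hilen, ?_, ?_⟩
  · dsimp only; rw [if_pos rfl, getElem?_append_left' hilen]; exact hi
  · dsimp only; rw [if_pos rfl]; simp

lemma bp_forward {D : Config B S} {m : Move S} {v : Fin B} (hE : Enabled D m)
    (hbp : BadlyPlaced D v) (hnm : ¬ MovedBlock D m v) :
    BadlyPlaced (applyMove D m) v := by
  obtain ⟨s', a, hav, i, k, hik, hi, hk⟩ := hbp
  cases m with
  | retrieve s =>
    obtain ⟨bmin, hlast, hmin⟩ := hE
    by_cases hss : s' = s
    · subst hss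
      have hklen := lt_length_of_getElem? hk
      have hkne : k ≠ (D s').length - 1 := by
        intro hkeq
        have h2 : (D s').getLast? = some v := by
          rw [List.getLast?_eq_getElem?, ← hkeq]; exact hk
        rw [hlast] at h2
        have hbv : bmin = v := Option.some_inj.mp h2
        have h3 := hmin s' a (mem_of_getElem?' hi)
        rw [hbv] at h3
        exact absurd h3 (not_le.mpr hav)
      refine ⟨s', a, hav, i, k, hik, ?_, ?_⟩ <;>
        simp only [applyMove, Function.update_self] <;>
        rw [List.dropLast_eq_take, getElem?_take' (by omega)]
      · exact hi
      · exact hk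
    · refine ⟨s', a, hav, i, k, hik, ?_, ?_⟩ <;>
        simp only [applyMove] <;> rw [Function.update_of_ne hss]
      · exact hi
      · exact hk
  | relocate src dst =>
    cases hlast : (D src).getLast? with
    | none =>
      have heq : applyMove D (.relocate src dst) = D := by simp [applyMove, hlast]
      rw [heq]
      exact ⟨s', a, hav, i, k, hik, hi, hk⟩
    | some b =>
      obtain ⟨hne, _⟩ := hE
      have hbv : b ≠ v := fun h => hnm ⟨src, dst, rfl, hne, h ▸ hlast⟩
      rw [relocate_apply hlast hne]
      by_cases h1 : s' = dst
      · subst h1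
        have hklen := lt_length_of_getElem? hk
        refine ⟨s', a, hav, i, k, hik, ?_, ?_⟩ <;>
          dsimp only <;> rw [if_pos rfl]
        · rw [getElem?_append_left' (by omega)]; exact hi
        · rw [getElem?_append_left' hklen]; exact hk
      · by_cases h2 : s' = src
        · subst h2
          have hklen := lt_length_of_getElem? hk
          have hkne : k ≠ (D s').length - 1 := by
            intro hkeq
            have h3 : (D s').getLast? = some v := by
              rw [List.getLast?_eq_getElem?, ← hkeq]; exact hk
            rw [hlast] at h3
            exact hbv (Option.some_inj.mp h3)
          refine ⟨s', a, hav, i, k, hik, ?_, ?_⟩ <;>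
            dsimp only <;> rw [if_neg h1, if_pos rfl] <;>
            rw [List.dropLast_eq_take, getElem?_take' (by omega)]
          · exact hi
          · exact hk
        · refine ⟨s', a, hav, i, k, hik, ?_, ?_⟩ <;>
            dsimp only <;> rw [if_neg h1, if_neg h2]
          · exact hi
          · exact hk

lemma pinv_step {C D : Config B S} {V : Set (Fin B)} (hC : IsConfig C)
    (hV : VirtualLayer C V)
    (hcond1 : ∃ s a b, b ∈ V ∧ StrictlyBelow C s a b ∧ ∀ c ∈ V, a < c)
    (hp : PInv C V D) {m : Move S} (hE : Enabled D m)
    (hnm : ∀ v ∈ V, ¬ MovedBlock D m v) :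
    PInv C V (applyMove D m) := by
  cases m with
  | retrieve s =>
    obtain ⟨bmin, hlast, hmin⟩ := hE
    intro d
    obtain ⟨w, j, t, hwV, hj, hD⟩ := hp d
    by_cases hds : d = s
    · subst hds
      cases t with
      | nil =>
        exfalso
        rw [hD, List.append_nil] at hlast
        have hbw : bmin = w := by
          have h2 := take_getLast? hj
          rw [hlast] at h2
          exact Option.some_inj.mp h2
        obtain ⟨a₀, s₁, hlt, ha₀⟩ := cond1_mem hC hV hcond1 hp
        have h1 := hmin s₁ a₀ ha₀
        have h2 := hlt w hwV
        rw [hbw] at h1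
        exact absurd h1 (not_le.mpr h2)
      | cons x xs =>
        refine ⟨w, j, (x :: xs).dropLast, hwV, hj, ?_⟩
        simp only [applyMove, Function.update_self]
        rw [hD, List.dropLast_append_of_ne_nil (by simp)]
    · refine ⟨w, j, t, hwV, hj, ?_⟩
      simp only [applyMove]
      rw [Function.update_of_ne hds]
      exact hD
  | relocate src dst =>
    obtain ⟨hne, hnil⟩ := hE
    obtain ⟨v, hlast⟩ : ∃ v, (D src).getLast? = some v :=
      ⟨(D src).getLast hnil, List.getLast?_eq_getLast hnil⟩
    rw [relocate_apply hlast hne]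
    intro d
    obtain ⟨w, j, t, hwV, hj, hD⟩ := hp d
    by_cases h1 : d = dst
    · subst h1
      refine ⟨w, j, t ++ [v], hwV, hj, ?_⟩
      dsimp only; rw [if_pos rfl, hD, List.append_assoc]
    · by_cases h2 : d = src
      · subst h2
        cases t with
        | nil =>
          exfalso
          refine hnm w hwV ⟨d, dst, rfl, hne, ?_⟩
          rw [hD, List.append_nil, take_getLast? hj]
        | cons x xs =>
          refine ⟨w, j, (x :: xs).dropLast, hwV, hj, ?_⟩
          dsimp only; rw [if_neg h1, if_pos rfl, hD,
            List.dropLast_append_of_ne_nil (by simp)]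
      · refine ⟨w, j, t, hwV, hj, ?_⟩
        dsimp only; rw [if_neg h1, if_neg h2]
        exact hD

lemma mem_of_getLast?' {α : Type*} {l : List α} {a : α} (h : l.getLast? = some a) : a ∈ l :=
  List.mem_of_mem_getLast? (by simp [h])

lemma countMoves_cons (P : Config B S → Move S → Prop) (D : Config B S) (m : Move S)
    (ms : List (Move S)) :
    countMoves P D (m :: ms) =
      (@ite ℕ (P D m) (Classical.propDecidable _) 1 0) + countMoves P (applyMove D m) ms := rfl

lemma le_countMoves_cons (P : Config B S → Move S → Prop) (D : Config B S) (m : Move S)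
    (ms : List (Move S)) :
    countMoves P (applyMove D m) ms ≤ countMoves P D (m :: ms) := by
  rw [countMoves_cons]; exact Nat.le_add_left _ _

lemma countMoves_cons_of_pos {P : Config B S → Move S → Prop} {D : Config B S} {m : Move S}
    (ms : List (Move S)) (h : P D m) :
    countMoves P D (m :: ms) = 1 + countMoves P (applyMove D m) ms := by
  rw [countMoves_cons, if_pos h]

lemma countMoves_mono {P Q : Config B S → Move S → Prop}
    (h : ∀ D m, P D m → Q D m) :
    ∀ (ms : List (Move S)) (D : Config B S), countMoves P D ms ≤ countMoves Q D ms
  | [], _ => le_refl 0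
  | m :: ms, D => by
    rw [countMoves_cons, countMoves_cons]
    have htail := countMoves_mono h ms (applyMove D m)
    by_cases hp : P D m
    · rw [if_pos hp, if_pos (h D m hp)]; omega
    · rw [if_neg hp]
      exact Nat.add_le_add (Nat.zero_le _) htail

lemma feasible_cons {D : Config B S} {m : Move S} {ms : List (Move S)}
    (h : Feasible D (m :: ms)) :
    Enabled D m ∧ Feasible (applyMove D m) ms :=
  ⟨h.1.1, h.1.2, fun s => h.2 s⟩

lemma head_nonBG {C D : Config B S} {V : Set (Fin B)} (hC : IsConfig C) (hP5 : P5 C V)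
    (hs : Sub1 D) (hp : PInv C V D) {src dst : Fin S} {v : Fin B}
    (hne : src ≠ dst) (hlast : (D src).getLast? = some v) (hv : v ∈ V) :
    ¬ MTypeOf D (.relocate src dst) v MType.BG := by
  rintro ⟨hbp, hnbp⟩
  have hbpC := bp_transfer hC hP5.1 hs hp hv hbp
  obtain ⟨a, haob, hav⟩ := hP5.2.2 v hv hbpC dst
  exact hnbp (bp_after_push hlast hne (atOrBelow_mem hC hP5.1 hp haob) hav)

lemma secondary {C : Config B S} {V : Set (Fin B)} (hC : IsConfig C) (hP5 : P5 C V) :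
    ∀ (ms : List (Move S)) (D : Config B S), Feasible D ms → Sub1 D → PInv C V D →
      1 ≤ countMoves (RelocNonBGIn V) D ms
  | [], D, hF, _, hp => by
    exfalso
    obtain ⟨a₀, s₁, _, ha₀⟩ := cond1_mem hC hP5.1 hP5.2.1 hp
    have hD0 : D s₁ = [] := hF.2 s₁
    rw [hD0] at ha₀
    exact List.not_mem_nil ha₀
  | m :: ms, D, hF, hs, hp => by
    obtain ⟨hE, hF'⟩ := feasible_cons hF
    by_cases hrel : ∃ v ∈ V, MovedBlock D m v
    · obtain ⟨v, hvV, src, dst, hm, hne, hlast⟩ := hrel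
      subst hm
      have hhead : RelocNonBGIn V D (.relocate src dst) :=
        ⟨v, hvV, ⟨src, dst, rfl, hne, hlast⟩, head_nonBG hC hP5 hs hp hne hlast hvV⟩
      rw [countMoves_cons_of_pos ms hhead]
      omega
    · push_neg at hrel
      exact le_trans (secondary hC hP5 ms (applyMove D m) hF' (sub1_step hs hE)
        (pinv_step hC hP5.1 hP5.2.1 hp hE hrel)) (le_countMoves_cons _ _ _ _)

lemma tertiary {bstar : Fin B} :
    ∀ (ms : List (Move S)) (D : Config B S), Feasible D ms → BadlyPlaced D bstar →
      1 ≤ countMoves (RelocTypeIn MType.BG {bstar}) D ms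
  | [], D, hF, hbp => by
    exfalso
    obtain ⟨s', a, _, i, k, _, _, hk⟩ := hbp
    have hD0 : D s' = [] := hF.2 s'
    rw [hD0] at hk
    simp at hk
  | m :: ms, D, hF, hbp => by
    obtain ⟨hE, hF'⟩ := feasible_cons hF
    by_cases hmv : MovedBlock D m bstar
    · by_cases hbp' : BadlyPlaced (applyMove D m) bstar
      · exact le_trans (tertiary ms _ hF' hbp') (le_countMoves_cons _ _ _ _)
      · have hhead : RelocTypeIn MType.BG {bstar} D m :=
          ⟨bstar, Set.mem_singleton _, hmv, ⟨hbp, hbp'⟩⟩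
        rw [countMoves_cons_of_pos ms hhead]
        omega
    · exact le_trans (tertiary ms _ hF' (bp_forward hE hbp hmv)) (le_countMoves_cons _ _ _ _)

lemma main_lemma {C : Config B S} {V₁ V₂ : Set (Fin B)} {bstar : Fin B}
    (hC : IsConfig C) (h7 : P7 C V₁ V₂ bstar) :
    ∀ (ms : List (Move S)) (D : Config B S), Feasible D ms → Sub1 D →
      PInv C V₁ D → PInv C V₂ D →
      2 ≤ countMoves (RelocNonBGIn (V₁ ∪ V₂)) D ms ∨
      (1 ≤ countMoves (RelocTypeIn MType.GB {bstar}) D ms ∧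
       1 ≤ countMoves (RelocTypeIn MType.BG {bstar}) D ms)
  | [], D, hF, _, hp₁, _ => by
    exfalso
    obtain ⟨a₀, s₁, _, ha₀⟩ := cond1_mem hC h7.2.2.2.1.1 h7.2.2.2.1.2.1 hp₁
    have hD0 : D s₁ = [] := hF.2 s₁
    rw [hD0] at ha₀
    exact List.not_mem_nil ha₀
  | m :: ms, D, hF, hs, hp₁, hp₂ => by
    have hP51 : P5 C V₁ := h7.2.2.2.1
    have hP52 : P5 C V₂ := h7.2.2.2.2.1
    obtain ⟨hE, hF'⟩ := feasible_cons hF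
    by_cases hrel : ∃ v ∈ V₁ ∪ V₂, MovedBlock D m v
    · obtain ⟨v, hvW, src, dst, hm, hne, hlast⟩ := hrel
      subst hm
      by_cases hv1 : v ∈ V₁ <;> by_cases hv2 : v ∈ V₂
      · -- the moved block is bstar
        have hvb : v = bstar := by
          have hmem : v ∈ V₁ ∩ V₂ := ⟨hv1, hv2⟩
          rw [h7.1] at hmem
          exact hmem
        subst hvb
        have hwp : ¬ BadlyPlaced D v := fun h => h7.2.1 (bp_transfer hC hP51.1 hs hp₁ hv1 h)
        obtain ⟨a, haob, hale⟩ := h7.2.2.2.2.2.1 dst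
        have hanb : a ≠ v := by
          rintro rfl
          exact hne (sub1_stack_unique hs (mem_of_getLast?' hlast)
            (atOrBelow_mem hC hP51.1 hp₁ haob))
        have hav : a < v := lt_of_le_of_ne hale hanb
        have hbp' : BadlyPlaced (applyMove D (.relocate src dst)) v :=
          bp_after_push hlast hne (atOrBelow_mem hC hP51.1 hp₁ haob) hav
        have hhead : RelocTypeIn MType.GB {v} D (.relocate src dst) :=
          ⟨v, Set.mem_singleton _, ⟨src, dst, rfl, hne, hlast⟩, ⟨hwp, hbp'⟩⟩
        right
        refine ⟨?_, le_trans (tertiary ms _ hF' hbp') (le_countMoves_cons _ _ _ _)⟩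
        rw [countMoves_cons_of_pos ms hhead]
        omega
      · -- v ∈ V₁ \ V₂
        left
        have hhead : RelocNonBGIn (V₁ ∪ V₂) D (.relocate src dst) :=
          ⟨v, Or.inl hv1, ⟨src, dst, rfl, hne, hlast⟩, head_nonBG hC hP51 hs hp₁ hne hlast hv1⟩
        have hnm₂ : ∀ u ∈ V₂, ¬ MovedBlock D (.relocate src dst) u := by
          rintro u hu ⟨src', dst', heq, -, hlast'⟩
          injection heq with he1 he2
          subst he1
          rw [hlast] at hlast'
          obtain rfl : v = u := Option.some_inj.mp hlast'
          exact hv2 hu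
        have htail : 1 ≤ countMoves (RelocNonBGIn (V₁ ∪ V₂))
            (applyMove D (.relocate src dst)) ms :=
          le_trans (secondary hC hP52 ms _ hF' (sub1_step hs hE)
              (pinv_step hC hP52.1 hP52.2.1 hp₂ hE hnm₂))
            (countMoves_mono (fun D' m' h => by
              obtain ⟨b, hb, h1, h2⟩ := h
              exact ⟨b, Or.inr hb, h1, h2⟩) ms _)
        rw [countMoves_cons_of_pos ms hhead]
        omega
      · -- v ∈ V₂ \ V₁
        left
        have hhead : RelocNonBGIn (V₁ ∪ V₂) D (.relocate src dst) :=
          ⟨v, Or.inr hv2, ⟨src, dst, rfl, hne, hlast⟩, head_nonBG hC hP52 hs hp₂ hne hlast hv2⟩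
        have hnm₁ : ∀ u ∈ V₁, ¬ MovedBlock D (.relocate src dst) u := by
          rintro u hu ⟨src', dst', heq, -, hlast'⟩
          injection heq with he1 he2
          subst he1
          rw [hlast] at hlast'
          obtain rfl : v = u := Option.some_inj.mp hlast'
          exact hv1 hu
        have htail : 1 ≤ countMoves (RelocNonBGIn (V₁ ∪ V₂))
            (applyMove D (.relocate src dst)) ms :=
          le_trans (secondary hC hP51 ms _ hF' (sub1_step hs hE)
              (pinv_step hC hP51.1 hP51.2.1 hp₁ hE hnm₁))
            (countMoves_mono (fun D' m' h => by
              obtain ⟨b, hb, h1, h2⟩ := h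
              exact ⟨b, Or.inl hb, h1, h2⟩) ms _)
        rw [countMoves_cons_of_pos ms hhead]
        omega
      · exact absurd hvW (by simp [hv1, hv2])
    · push_neg at hrel
      have hnm₁ : ∀ u ∈ V₁, ¬ MovedBlock D m u := fun u hu => hrel u (Or.inl hu)
      have hnm₂ : ∀ u ∈ V₂, ¬ MovedBlock D m u := fun u hu => hrel u (Or.inr hu)
      rcases main_lemma hC h7 ms (applyMove D m) hF' (sub1_step hs hE)
          (pinv_step hC hP51.1 hP51.2.1 hp₁ hE hnm₁)
          (pinv_step hC hP52.1 hP52.2.1 hp₂ hE hnm₂) with h | ⟨h1, h2⟩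
      · exact Or.inl (le_trans h (le_countMoves_cons _ _ _ _))
      · exact Or.inr ⟨le_trans h1 (le_countMoves_cons _ _ _ _),
          le_trans h2 (le_countMoves_cons _ _ _ _)⟩


end BRP7

/-- Theorem 4, Property 7: if `V₁` (upper) and `V₂` (lower) are
virtual layers sharing exactly the well-placed block `bstar` and satisfying the
conditions of Property 7, then every feasible move sequence either contains at
least 2 non-BG relocations of blocks of `V₁ ∪ V₂`, or contains at least one GB
relocation of `bstar` and at least one BG relocation of `bstar`. -/
theorem brp_property7 {B S : ℕ} (hS : 2 ≤ S) (hB : 1 ≤ B)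
    (C : Config B S) (hC : IsConfig C) (hne : ∀ s, C s ≠ [])
    (V₁ V₂ : Set (Fin B)) (bstar : Fin B) (h7 : P7 C V₁ V₂ bstar) :
    ∀ ms, Feasible C ms →
      2 ≤ countMoves (RelocNonBGIn (V₁ ∪ V₂)) C ms ∨
      (1 ≤ countMoves (RelocTypeIn MType.GB {bstar}) C ms ∧
       1 ≤ countMoves (RelocTypeIn MType.BG {bstar}) C ms) := by
  intro ms hF
  exact BRP7.main_lemma hC h7 ms C hF (fun b => le_of_eq (hC b))
    (BRP7.pinv_init h7.2.2.2.1.1) (BRP7.pinv_init h7.2.2.2.2.1.1)
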